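/- If D is a d-set in ℝⁿ with d-measure μ, then its closure D̄ is also a d-set, and moreover μ(D̄ \ D) = 0 when μ is extended naturally (equivalently, the restriction of the d-dimensional Hausdorff measure to D̄ \ D is zero). -/

import Mathlib

open MeasureTheory Metric Set Filter
open scoped ENNReal NNReal Topology

lemma dset_upper_small {E : Type*} [MetricSpace E] [MeasurableSpace E]
    {D : Set E} {μ : Measure E} (hμD : μ Dᶜ = 0) {d c₂ : ℝ}
    (hμ : ∀ x ∈ D, ∀ r : ℝ, 0 < r → r ≤ 1 → μ (ball x r) ≤ ENNReal.ofReal (c₂ * r ^ d))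
    (x : E) (r : ℝ) (hr : 0 < r) (hr2 : r ≤ 1/2) :
    μ (ball x r) ≤ ENNReal.ofReal (c₂ * (2*r) ^ d) := by
  by_cases h : (ball x r ∩ D).Nonempty
  · obtain ⟨y, hyb, hyD⟩ := h
    have hsub : ball x r ⊆ ball y (2*r) := by
      intro z hz
      have h1 : dist z x < r := mem_ball.1 hz
      have h2 : dist y x < r := mem_ball.1 hyb
      have := dist_triangle z x y
      rw [mem_ball]; rw [dist_comm] at h2; linarith
    exact (measure_mono hsub).trans (hμ y hyD (2*r) (by linarith) (by linarith))
  · have hsub : ball x r ⊆ Dᶜ := fun z hz hzD => h ⟨z, hz, hzD⟩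
    simp [measure_mono_null hsub hμD]

lemma dset_lower_closure {E : Type*} [MetricSpace E] [MeasurableSpace E]
    {D : Set E} {μ : Measure E} {d c₁ : ℝ}
    (hμ : ∀ x ∈ D, ∀ r : ℝ, 0 < r → r ≤ 1 → ENNReal.ofReal (c₁ * r ^ d) ≤ μ (ball x r))
    (x : E) (hx : x ∈ closure D) (r : ℝ) (hr : 0 < r) (hr1 : r ≤ 1) :
    ENNReal.ofReal (c₁ * (r/2) ^ d) ≤ μ (ball x r) := by
  obtain ⟨y, hyD, hxy⟩ := Metric.mem_closure_iff.1 hx (r/2) (by linarith)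
  have hsub : ball y (r/2) ⊆ ball x r := by
    intro z hz
    have h1 : dist z y < r/2 := mem_ball.1 hz
    have := dist_triangle z y x
    rw [mem_ball]; rw [dist_comm] at hxy; linarith
  exact (hμ y hyD (r/2) (by linarith) (by linarith)).trans (measure_mono hsub)

lemma euclid_ball_cover (n : ℕ) :
    ∃ s : Finset (EuclideanSpace ℝ (Fin n)),
      ∀ x : EuclideanSpace ℝ (Fin n), ball x 1 ⊆ ⋃ t ∈ s, ball (x + t) (1/4) := by
  obtain ⟨s, hs⟩ := (isCompact_closedBall (0 : EuclideanSpace ℝ (Fin n)) 1).elim_finite_subcover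
    (fun t => ball t (1/4)) (fun t => isOpen_ball)
    (fun y _ => mem_iUnion.2 ⟨y, mem_ball_self (by norm_num)⟩)
  refine ⟨s, fun x y hy => ?_⟩
  have h0 : y - x ∈ closedBall (0 : EuclideanSpace ℝ (Fin n)) 1 := by
    rw [mem_closedBall, dist_zero_right]
    have := mem_ball.1 hy
    rw [dist_eq_norm] at this
    exact this.le
  obtain ⟨t, ht, hyt⟩ := mem_iUnion₂.1 (hs h0)
  refine mem_iUnion₂.2 ⟨t, ht, ?_⟩
  rw [mem_ball, dist_eq_norm, show y - (x + t) = (y - x) - t by abel]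
  rw [mem_ball, dist_eq_norm] at hyt
  exact hyt

lemma dset_upper_all (n : ℕ) {d : ℝ} (hd : 0 < d)
    {D : Set (EuclideanSpace ℝ (Fin n))} {μ : Measure (EuclideanSpace ℝ (Fin n))}
    (hμD : μ Dᶜ = 0) {c₂ : ℝ} (hc₂ : 0 < c₂)
    (hμ : ∀ x ∈ D, ∀ r : ℝ, 0 < r → r ≤ 1 → μ (ball x r) ≤ ENNReal.ofReal (c₂ * r ^ d)) :
    ∃ c₂' : ℝ, 0 < c₂' ∧ ∀ (x : EuclideanSpace ℝ (Fin n)) (r : ℝ), 0 < r → r ≤ 1 →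
      μ (ball x r) ≤ ENNReal.ofReal (c₂' * r ^ d) := by
  obtain ⟨s, hs⟩ := euclid_ball_cover n
  set K : ℝ := (s.card : ℝ) with hKdef
  have hK : 0 ≤ K := Nat.cast_nonneg _
  have h2d : (0:ℝ) < 2^(d:ℝ) := Real.rpow_pos_of_pos two_pos d
  have h1le : (1:ℝ) ≤ 2^(d:ℝ) := by
    have := Real.rpow_le_rpow_of_exponent_le (x := 2) (by norm_num) hd.le
    simpa [Real.rpow_zero] using this
  refine ⟨(K+1) * c₂ * 2^(d:ℝ), by positivity, fun x r hr hr1 => ?_⟩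
  have hrd : (0:ℝ) < r^(d:ℝ) := Real.rpow_pos_of_pos hr d
  rcases le_or_gt r (1/2) with h | h
  · refine (dset_upper_small hμD hμ x r hr h).trans (ENNReal.ofReal_le_ofReal ?_)
    rw [Real.mul_rpow (by norm_num) hr.le]
    calc c₂ * (2^(d:ℝ) * r^(d:ℝ)) ≤ (K+1) * (c₂ * (2^(d:ℝ) * r^(d:ℝ))) :=
          le_mul_of_one_le_left (by positivity) (by linarith)
      _ = (K+1) * c₂ * 2^(d:ℝ) * r^(d:ℝ) := by ring
  · have hb : μ (ball x r) ≤ μ (ball x 1) := measure_mono (ball_subset_ball hr1)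
    have hsum : μ (ball x 1) ≤ ∑ t ∈ s, μ (ball (x + t) (1/4)) :=
      (measure_mono (hs x)).trans (measure_biUnion_finset_le s _)
    have hterm : ∀ t ∈ s, μ (ball (x+t) (1/4)) ≤ ENNReal.ofReal (c₂ * (1/2:ℝ)^(d:ℝ)) := by
      intro t _
      have h14 := dset_upper_small hμD hμ (x+t) (1/4) (by norm_num) (by norm_num)
      have : (2 * (1/4:ℝ)) = 1/2 := by norm_num
      rwa [this] at h14
    have hmain : μ (ball x r) ≤ s.card • ENNReal.ofReal (c₂ * (1/2:ℝ)^(d:ℝ)) :=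
      (hb.trans hsum).trans (Finset.sum_le_card_nsmul s _ _ hterm)
    rw [nsmul_eq_mul] at hmain
    refine hmain.trans ?_
    rw [← ENNReal.ofReal_natCast s.card, ← ENNReal.ofReal_mul (Nat.cast_nonneg _)]
    apply ENNReal.ofReal_le_ofReal
    have hhalf : (1/2:ℝ)^(d:ℝ) ≤ r^(d:ℝ) := Real.rpow_le_rpow (by norm_num) (by linarith) hd.le
    have step1 : K * (c₂ * (1/2:ℝ)^(d:ℝ)) ≤ K * (c₂ * r^(d:ℝ)) :=
      mul_le_mul_of_nonneg_left (mul_le_mul_of_nonneg_left hhalf hc₂.le) hK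
    have step2 : K * (c₂ * r^(d:ℝ)) ≤ (K+1) * c₂ * 2^(d:ℝ) * r^(d:ℝ) := by
      have h1 : K ≤ (K+1) * 2^(d:ℝ) := by
        nlinarith [mul_nonneg (show (0:ℝ) ≤ K+1 by linarith) (show (0:ℝ) ≤ 2^(d:ℝ) - 1 by linarith)]
      calc K * (c₂ * r^(d:ℝ)) ≤ ((K+1) * 2^(d:ℝ)) * (c₂ * r^(d:ℝ)) :=
            mul_le_mul_of_nonneg_right h1 (by positivity)
        _ = (K+1) * c₂ * 2^(d:ℝ) * r^(d:ℝ) := by ring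
    linarith

lemma dset_hausdorff_null (n : ℕ) {d : ℝ} (hd : 0 < d)
    {D : Set (EuclideanSpace ℝ (Fin n))} {μ : Measure (EuclideanSpace ℝ (Fin n))}
    (hμD : μ Dᶜ = 0) {c₁ c₂ : ℝ} (hc₁ : 0 < c₁) (hc₂ : 0 < c₂)
    (hμl : ∀ x ∈ D, ∀ r : ℝ, 0 < r → r ≤ 1 → ENNReal.ofReal (c₁ * r ^ d) ≤ μ (ball x r))
    (hμu : ∀ x ∈ D, ∀ r : ℝ, 0 < r → r ≤ 1 → μ (ball x r) ≤ ENNReal.ofReal (c₂ * r ^ d)) :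
    μH[d] (closure D \ D) = 0 := by
  haveI : IsLocallyFiniteMeasure μ :=
    ⟨fun x => ⟨ball x (1/4), ball_mem_nhds x (by norm_num),
      (dset_upper_small hμD hμu x (1/4) (by norm_num) (by norm_num)).trans_lt
        ENNReal.ofReal_lt_top⟩⟩
  set A := closure D \ D with hAdef
  have hA0 : μ A = 0 := measure_mono_null (fun y hy => hy.2) hμD
  have hAc : A ⊆ closure D := fun y hy => hy.1
  have key : ∀ ε : ℝ≥0, 0 < ε → μH[d] A ≤ (ε : ℝ≥0∞) := by
    intro ε hε
    have h4d : (0:ℝ) < 4^(d:ℝ) := Real.rpow_pos_of_pos (by norm_num) d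
    set C : ℝ≥0∞ := ENNReal.ofReal (c₁ / 4^(d:ℝ)) with hC
    set C' : ℝ≥0∞ := ENNReal.ofReal (4^(d:ℝ) / c₁) with hC'
    have hCC' : C' * C = 1 := by
      rw [hC, hC', ← ENNReal.ofReal_mul (by positivity),
        show 4^(d:ℝ)/c₁ * (c₁/4^(d:ℝ)) = 1 by field_simp]
      exact ENNReal.ofReal_one
    have hε' : C * (ε : ℝ≥0∞) ≠ 0 := by
      apply mul_ne_zero
      · rw [hC]
        simp only [ne_eq, ENNReal.ofReal_eq_zero, not_le]
        positivity
      · exact_mod_cast hε.ne'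
    have B : ∀ k : ℕ, ∃ (t : Set (EuclideanSpace ℝ (Fin n))) (rr : EuclideanSpace ℝ (Fin n) → ℝ),
        t.Countable ∧ t ⊆ A ∧ (∀ x ∈ t, rr x ∈ Ioo (0:ℝ) (1/(k+1:ℝ))) ∧
        (A ⊆ ⋃ x ∈ t, closedBall x (rr x)) ∧
        (∑' x : t, μ (closedBall x (rr x))) ≤ μ A + C * ε := by
      intro k
      have hk : (0:ℝ) < 1/(k+1:ℝ) := by positivity
      exact Besicovitch.exists_closedBall_covering_tsum_measure_le μ hε'
        (fun _ => Ioo (0:ℝ) (1/(k+1:ℝ))) A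
        (fun x _ δ hδ => by
          have hm0 : 0 < min (1/(k+1:ℝ)) δ := lt_min hk hδ
          have hm1 := min_le_left (1/(k+1:ℝ)) δ
          have hm2 := min_le_right (1/(k+1:ℝ)) δ
          exact ⟨min (1/(k+1:ℝ)) δ / 2, ⟨⟨by linarith, by linarith⟩, by linarith, by linarith⟩⟩)
    choose t rr htc hts hr hcov hsum using B
    haveI : ∀ k : ℕ, Countable (t k) := fun k => (htc k).to_subtype
    have hrle1 : ∀ k : ℕ, (1/(k+1:ℝ)) ≤ 1 := by
      intro k
      rw [div_le_one (by positivity)]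
      have : (0:ℝ) ≤ (k:ℝ) := Nat.cast_nonneg k
      linarith
    have hdiam : ∀ (k : ℕ) (i : t k),
        EMetric.diam (closedBall (i : EuclideanSpace ℝ (Fin n)) (rr k i)) ≤
          ENNReal.ofReal (2 * rr k i) := by
      intro k i
      refine EMetric.diam_le fun x hx y hy => ?_
      rw [edist_dist]
      apply ENNReal.ofReal_le_ofReal
      have h1 : dist x (i : EuclideanSpace ℝ (Fin n)) ≤ rr k i := mem_closedBall.1 hx
      have h2 : dist y (i : EuclideanSpace ℝ (Fin n)) ≤ rr k i := mem_closedBall.1 hy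
      have := dist_triangle x (i : EuclideanSpace ℝ (Fin n)) y
      rw [dist_comm (i : EuclideanSpace ℝ (Fin n)) y] at this
      linarith
    have hterm : ∀ (k : ℕ) (i : t k),
        (EMetric.diam (closedBall (i : EuclideanSpace ℝ (Fin n)) (rr k i))) ^ (d:ℝ) ≤
          C' * μ (closedBall (i : EuclideanSpace ℝ (Fin n)) (rr k i)) := by
      intro k i
      have hrpos : 0 < rr k i := (hr k i i.2).1
      have hrlt : rr k i < 1/(k+1:ℝ) := (hr k i i.2).2
      have hrle : rr k i ≤ 1 := le_trans hrlt.le (hrle1 k)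
      calc (EMetric.diam (closedBall (i : EuclideanSpace ℝ (Fin n)) (rr k i))) ^ (d:ℝ)
          ≤ (ENNReal.ofReal (2 * rr k i)) ^ (d:ℝ) :=
            ENNReal.rpow_le_rpow (hdiam k i) hd.le
        _ = ENNReal.ofReal ((2 * rr k i) ^ (d:ℝ)) :=
            ENNReal.ofReal_rpow_of_nonneg (by positivity) hd.le
        _ = ENNReal.ofReal ((4^(d:ℝ)/c₁) * (c₁ * (rr k i / 2) ^ (d:ℝ))) := by
            congr 1
            have e1 : (4:ℝ)^(d:ℝ) * (rr k i / 2)^(d:ℝ) = (2 * rr k i)^(d:ℝ) := by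
              rw [← Real.mul_rpow (by norm_num) (by positivity)]
              congr 1; ring
            have e2 : (4^(d:ℝ)/c₁) * (c₁ * (rr k i / 2)^(d:ℝ)) =
                (4:ℝ)^(d:ℝ) * (rr k i / 2)^(d:ℝ) := by
              field_simp
            rw [e2, e1]
        _ = C' * ENNReal.ofReal (c₁ * (rr k i / 2) ^ (d:ℝ)) := by
            rw [hC', ENNReal.ofReal_mul (by positivity)]
        _ ≤ C' * μ (closedBall (i : EuclideanSpace ℝ (Fin n)) (rr k i)) := by
            apply mul_le_mul_right
            exact (dset_lower_closure hμl _ (hAc (hts k i.2)) _ hrpos hrle).trans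
              (measure_mono ball_subset_closedBall)
    set g : ℕ → ℝ≥0∞ := fun k =>
      ∑' i : t k, (EMetric.diam (closedBall (i : EuclideanSpace ℝ (Fin n)) (rr k i))) ^ (d:ℝ)
      with hg
    have hbound : ∀ k : ℕ, g k ≤ (ε : ℝ≥0∞) := by
      intro k
      have s1 : g k ≤ ∑' i : t k, C' * μ (closedBall (i : EuclideanSpace ℝ (Fin n)) (rr k i)) :=
        ENNReal.tsum_le_tsum (hterm k)
      have s2 : (∑' i : t k, C' * μ (closedBall (i : EuclideanSpace ℝ (Fin n)) (rr k i))) =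
          C' * ∑' i : t k, μ (closedBall (i : EuclideanSpace ℝ (Fin n)) (rr k i)) :=
        ENNReal.tsum_mul_left
      have s3 : C' * (∑' i : t k, μ (closedBall (i : EuclideanSpace ℝ (Fin n)) (rr k i))) ≤
          C' * (μ A + C * ε) := mul_le_mul_right (hsum k) _
      have s4 : C' * (μ A + C * ε) = (ε : ℝ≥0∞) := by
        rw [hA0, zero_add, ← mul_assoc, hCC', one_mul]
      calc g k ≤ _ := s1
        _ = _ := s2
        _ ≤ _ := s3
        _ = _ := s4
    have hle : μH[d] A ≤ liminf g atTop := by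
      refine Measure.hausdorffMeasure_le_liminf_tsum d A (fun k : ℕ => ENNReal.ofReal (2/(k+1:ℝ))) ?_
        (fun k (i : t k) => closedBall (i : EuclideanSpace ℝ (Fin n)) (rr k i)) ?_ ?_
      · have h0 : Tendsto (fun k : ℕ => 2/(k+1:ℝ)) atTop (𝓝 0) := by
          have := tendsto_one_div_add_atTop_nhds_zero_nat.const_mul (2:ℝ)
          simpa [mul_one_div, div_eq_mul_inv] using this
        have := ENNReal.tendsto_ofReal h0
        simpa using this
      · refine Eventually.of_forall fun k => fun i => ?_
        refine (hdiam k i).trans (ENNReal.ofReal_le_ofReal ?_)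
        have hrlt : rr k i < 1/(k+1:ℝ) := (hr k i i.2).2
        rw [div_eq_mul_one_div]
        linarith
      · refine Eventually.of_forall fun k => ?_
        rw [iUnion_coe_set]
        exact hcov k
    refine hle.trans ?_
    calc liminf g atTop ≤ liminf (fun _ : ℕ => (ε : ℝ≥0∞)) atTop :=
          liminf_le_liminf (Eventually.of_forall hbound)
      _ = (ε : ℝ≥0∞) := liminf_const _
  refine le_antisymm ?_ (zero_le)
  refine ENNReal.le_of_forall_pos_le_add fun ε hε _ => ?_
  simpa using key ε hε

/-- If `D` is a `d`-set in `ℝⁿ` with `d`-measure `μ`, then its closure is also a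
`d`-set, and the restriction of the `d`-dimensional Hausdorff measure to
`closure D \ D` is zero. -/
theorem closure_d_set (n : ℕ) (d : ℝ) (hd : 0 < d) (hdn : d ≤ n)
    (D : Set (EuclideanSpace ℝ (Fin n))) (hD : D.Nonempty) (hDborel : MeasurableSet D)
    (μ : Measure (EuclideanSpace ℝ (Fin n))) (hμD : μ Dᶜ = 0)
    (c₁ c₂ : ℝ) (hc₁ : 0 < c₁) (hc₂ : 0 < c₂)
    (hμ : ∀ x ∈ D, ∀ r : ℝ, 0 < r → r ≤ 1 →
      ENNReal.ofReal (c₁ * r ^ d) ≤ μ (ball x r) ∧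
        μ (ball x r) ≤ ENNReal.ofReal (c₂ * r ^ d)) :
    (∃ (ν : Measure (EuclideanSpace ℝ (Fin n))) (c₁' c₂' : ℝ), 0 < c₁' ∧ 0 < c₂' ∧
      ν (closure D)ᶜ = 0 ∧
      ∀ x ∈ closure D, ∀ r : ℝ, 0 < r → r ≤ 1 →
        ENNReal.ofReal (c₁' * r ^ d) ≤ ν (ball x r) ∧
          ν (ball x r) ≤ ENNReal.ofReal (c₂' * r ^ d)) ∧
    Measure.hausdorffMeasure d (closure D \ D) = 0 := by
  have hμl : ∀ x ∈ D, ∀ r : ℝ, 0 < r → r ≤ 1 →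
      ENNReal.ofReal (c₁ * r ^ d) ≤ μ (ball x r) := fun x hx r h1 h2 => (hμ x hx r h1 h2).1
  have hμu : ∀ x ∈ D, ∀ r : ℝ, 0 < r → r ≤ 1 →
      μ (ball x r) ≤ ENNReal.ofReal (c₂ * r ^ d) := fun x hx r h1 h2 => (hμ x hx r h1 h2).2
  constructor
  · obtain ⟨c₂', hc₂', hupper⟩ := dset_upper_all n hd hμD hc₂ hμu
    have h2d : (0:ℝ) < 2^(d:ℝ) := Real.rpow_pos_of_pos two_pos d
    refine ⟨μ, c₁ / 2^(d:ℝ), c₂', by positivity, hc₂',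
      measure_mono_null (compl_subset_compl.2 subset_closure) hμD, fun x hx r hr hr1 => ?_⟩
    constructor
    · have hlow := dset_lower_closure hμl x hx r hr hr1
      have e : c₁ / 2^(d:ℝ) * r^(d:ℝ) = c₁ * (r/2)^(d:ℝ) := by
        rw [Real.div_rpow hr.le (by norm_num)]
        ring
      rw [e]
      exact hlow
    · exact hupper x r hr hr1
  · exact dset_hausdorff_null n hd hμD hc₁ hc₂ hμl hμu
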